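/- Let Ω be a finite set and let φ : Δ(Ω) → Δ(Ω) be a power-weighted distortion function with parameters ψ : Ω → ℝ₊₊ and α > 1. Then for every p ∈ Δ(Ω), the limit φ*(p) = lim_{n→∞} φ^n(p) exists; letting M = max_{ω∈Ω} p(ω)^{α−1}·ψ(ω) and S = {ω : p(ω)^{α−1}·ψ(ω) = M}, one has φ*(p)(ω) = ψ(ω)^{1/(1−α)} / Σ_{ω'∈S} ψ(ω')^{1/(1−α)} for ω ∈ S and φ*(p)(ω) = 0 otherwise. -/

import Mathlib

open Finset Filter Topology
open scoped Classical

/-- `p` is a probability distribution on the finite set `Ω`. -/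
def IsDist {Ω : Type*} [Fintype Ω] (p : Ω → ℝ) : Prop :=
  (∀ ω, 0 ≤ p ω) ∧ ∑ ω, p ω = 1

/-- `φ` is a power-weighted distorted belief with weights `ψ` and power `α`. -/
def IsPowerWeighted {Ω : Type*} [Fintype Ω] (φ : (Ω → ℝ) → Ω → ℝ)
    (ψ : Ω → ℝ) (α : ℝ) : Prop :=
  (∀ ω, 0 < ψ ω) ∧ 0 < α ∧
    ∀ p, IsDist p → ∀ ω, φ p ω = ψ ω * p ω ^ α / ∑ ω', ψ ω' * p ω' ^ α

section Aux

variable {Ω : Type*} [Fintype Ω]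

lemma exists_pos_of_isDist {p : Ω → ℝ} (hp : IsDist p) : ∃ ω, 0 < p ω := by
  by_contra h
  push_neg at h
  have h0 : ∑ ω, p ω = 0 := Finset.sum_eq_zero fun ω _ => le_antisymm (h ω) (hp.1 ω)
  rw [hp.2] at h0
  norm_num at h0

lemma key_formula {φ : (Ω → ℝ) → Ω → ℝ} {ψ : Ω → ℝ} {α : ℝ}
    (hpw : IsPowerWeighted φ ψ α) (hα : 1 < α) {p : Ω → ℝ} (hp : IsDist p) (n : ℕ) :
    IsDist (φ^[n] p) ∧ ∀ ω, φ^[n] p ω =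
      ψ ω ^ ((α ^ n - 1) / (α - 1)) * p ω ^ (α ^ n) /
        ∑ ω', ψ ω' ^ ((α ^ n - 1) / (α - 1)) * p ω' ^ (α ^ n) := by
  obtain ⟨hψ, hα0, hφ⟩ := hpw
  have hα1 : (0:ℝ) < α - 1 := by linarith
  obtain ⟨ω1, hω1⟩ := exists_pos_of_isDist hp
  have hFnn : ∀ (n : ℕ) (ω : Ω),
      0 ≤ ψ ω ^ ((α ^ n - 1) / (α - 1)) * p ω ^ (α ^ n) := fun n ω =>
    mul_nonneg (Real.rpow_nonneg (hψ ω).le _) (Real.rpow_nonneg (hp.1 ω) _)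
  have hT : ∀ n : ℕ, 0 < ∑ ω', ψ ω' ^ ((α ^ n - 1) / (α - 1)) * p ω' ^ (α ^ n) := by
    intro n
    refine Finset.sum_pos' (fun ω _ => hFnn n ω) ⟨ω1, Finset.mem_univ _, ?_⟩
    exact mul_pos (Real.rpow_pos_of_pos (hψ ω1) _) (Real.rpow_pos_of_pos hω1 _)
  induction n with
  | zero =>
      constructor
      · simpa using hp
      · intro ω
        simp [hp.2]
  | succ n ih =>
      obtain ⟨hd, hf⟩ := ih
      set T : ℝ := ∑ ω', ψ ω' ^ ((α ^ n - 1) / (α - 1)) * p ω' ^ (α ^ n) with hTdef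
      have hTpos : 0 < T := hT n
      have hstep : ∀ ω : Ω,
          ψ ω * (ψ ω ^ ((α ^ n - 1) / (α - 1)) * p ω ^ (α ^ n)) ^ α =
          ψ ω ^ ((α ^ (n+1) - 1) / (α - 1)) * p ω ^ (α ^ (n+1)) := by
        intro ω
        rw [Real.mul_rpow (Real.rpow_nonneg (hψ ω).le _) (Real.rpow_nonneg (hp.1 ω) _),
          ← Real.rpow_mul (hψ ω).le, ← Real.rpow_mul (hp.1 ω)]
        have e1 : α ^ n * α = α ^ (n+1) := by ring
        have e2 : 1 + (α ^ n - 1) / (α - 1) * α = (α ^ (n+1) - 1) / (α - 1) := by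
          field_simp
          ring
        rw [e1, ← mul_assoc, ← Real.rpow_one_add' (hψ ω).le (by
          rw [e2]
          have hpow : (1:ℝ) < α ^ (n+1) := one_lt_pow₀ hα (Nat.succ_ne_zero n)
          exact ne_of_gt (div_pos (by linarith) hα1)), e2]
      have hiter : ∀ ω : Ω, φ^[n+1] p ω =
          ψ ω ^ ((α ^ (n+1) - 1) / (α - 1)) * p ω ^ (α ^ (n+1)) /
            ∑ ω', ψ ω' ^ ((α ^ (n+1) - 1) / (α - 1)) * p ω' ^ (α ^ (n+1)) := by
        intro ω
        rw [Function.iterate_succ_apply', hφ _ hd ω]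
        have hrw : ∀ ω' : Ω, ψ ω' * (φ^[n] p ω') ^ α =
            (ψ ω' ^ ((α ^ (n+1) - 1) / (α - 1)) * p ω' ^ (α ^ (n+1))) / T ^ α := by
          intro ω'
          rw [hf ω', Real.div_rpow (hFnn n ω') hTpos.le, ← hstep ω']
          ring
        rw [hrw ω]
        have hsum : ∑ ω', ψ ω' * (φ^[n] p ω') ^ α =
            (∑ ω', ψ ω' ^ ((α ^ (n+1) - 1) / (α - 1)) * p ω' ^ (α ^ (n+1))) / T ^ α := by
          rw [Finset.sum_div]
          exact Finset.sum_congr rfl fun ω' _ => hrw ω'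
        rw [hsum, div_div_div_cancel_right₀]
        exact (Real.rpow_pos_of_pos hTpos α).ne'
      refine ⟨⟨fun ω => ?_, ?_⟩, hiter⟩
      · rw [hiter ω]
        exact div_nonneg (hFnn (n+1) ω) (hT (n+1)).le
      · have hsum : ∑ ω, φ^[n+1] p ω =
            (∑ ω, ψ ω ^ ((α ^ (n+1) - 1) / (α - 1)) * p ω ^ (α ^ (n+1))) /
              ∑ ω', ψ ω' ^ ((α ^ (n+1) - 1) / (α - 1)) * p ω' ^ (α ^ (n+1)) := by
          rw [Finset.sum_div]
          exact Finset.sum_congr rfl fun ω _ => hiter ω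
        rw [hsum, div_self (hT (n+1)).ne']

end Aux

/-- **Limit beliefs for `α > 1`**: the iterates `φⁿ(p)` converge pointwise; with
`S = {ω : p(ω)^{α−1}·ψ(ω) maximal}`, the limit is proportional to `ψ(ω)^{1/(1−α)}` on
`S` and `0` elsewhere (with the convention `0^{α−1} = 0`). -/
theorem stmt18 {Ω : Type*} [Fintype Ω]
    (φ : (Ω → ℝ) → Ω → ℝ) (ψ : Ω → ℝ) (α : ℝ)
    (hpw : IsPowerWeighted φ ψ α) (hα : 1 < α) :
    ∀ p, IsDist p → ∀ ω : Ω,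
      ((∀ ω', p ω' ^ (α - 1) * ψ ω' ≤ p ω ^ (α - 1) * ψ ω) →
        Tendsto (fun n => φ^[n] p ω) atTop
          (𝓝 (ψ ω ^ (1 / (1 - α)) /
            ∑ ω' ∈ Finset.univ.filter
              (fun ω' => ∀ ω'', p ω'' ^ (α - 1) * ψ ω'' ≤ p ω' ^ (α - 1) * ψ ω'),
              ψ ω' ^ (1 / (1 - α))))) ∧
      (¬(∀ ω', p ω' ^ (α - 1) * ψ ω' ≤ p ω ^ (α - 1) * ψ ω) →
        Tendsto (fun n => φ^[n] p ω) atTop (𝓝 0)) := by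
  intro p hp ω
  have hψ := hpw.1
  have hα1 : (0:ℝ) < α - 1 := by linarith
  set a : Ω → ℝ := fun ω' => p ω' ^ (α - 1) * ψ ω' with ha
  have hann : ∀ ω', 0 ≤ a ω' := fun ω' =>
    mul_nonneg (Real.rpow_nonneg (hp.1 ω') _) (hψ ω').le
  obtain ⟨ω1, hω1⟩ := exists_pos_of_isDist hp
  have haω1 : 0 < a ω1 := mul_pos (Real.rpow_pos_of_pos hω1 _) (hψ ω1)
  obtain ⟨ω0, -, hω0⟩ := Finset.exists_max_image Finset.univ a ⟨ω1, Finset.mem_univ ω1⟩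
  set M : ℝ := a ω0 with hMdef
  have hM : 0 < M := lt_of_lt_of_le haω1 (hω0 ω1 (Finset.mem_univ _))
  set S : Finset Ω := Finset.univ.filter
      (fun ω' => ∀ ω'', p ω'' ^ (α - 1) * ψ ω'' ≤ p ω' ^ (α - 1) * ψ ω') with hS
  have hmemS : ∀ ω', ω' ∈ S ↔ a ω' = M := by
    intro ω'
    simp only [hS, Finset.mem_filter, Finset.mem_univ, true_and]
    constructor
    · intro h
      exact le_antisymm (hω0 ω' (Finset.mem_univ _)) (h ω0)
    · intro h ω''
      show a ω'' ≤ a ω'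
      rw [h]
      exact hω0 ω'' (Finset.mem_univ _)
  set g : ℕ → Ω → ℝ := fun n ω' => (a ω' / M) ^ (α ^ n / (α - 1)) * ψ ω' ^ (1 / (1 - α))
    with hg
  have hFg : ∀ (n : ℕ) (ω' : Ω),
      M ^ (α ^ n / (α - 1)) * g n ω' =
        ψ ω' ^ ((α ^ n - 1) / (α - 1)) * p ω' ^ (α ^ n) := by
    intro n ω'
    simp only [hg, ha]
    rw [Real.div_rpow (hann ω') hM.le,
      Real.mul_rpow (Real.rpow_nonneg (hp.1 ω') _) (hψ ω').le,
      ← Real.rpow_mul (hp.1 ω')]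
    have e1 : (α - 1) * (α ^ n / (α - 1)) = α ^ n := by field_simp
    rw [e1]
    have hMne : (M : ℝ) ^ (α ^ n / (α - 1)) ≠ 0 := (Real.rpow_pos_of_pos hM _).ne'
    have e2 : ψ ω' ^ (α ^ n / (α - 1)) * ψ ω' ^ (1 / (1 - α)) =
        ψ ω' ^ ((α ^ n - 1) / (α - 1)) := by
      rw [← Real.rpow_add (hψ ω')]
      congr 1
      have h1 : (1 : ℝ) - α ≠ 0 := by intro h; linarith
      field_simp
      ring
    calc M ^ (α ^ n / (α - 1)) *
        (p ω' ^ (α ^ n) * ψ ω' ^ (α ^ n / (α - 1)) / M ^ (α ^ n / (α - 1)) *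
          ψ ω' ^ (1 / (1 - α)))
        = p ω' ^ (α ^ n) * (ψ ω' ^ (α ^ n / (α - 1)) * ψ ω' ^ (1 / (1 - α))) := by
          field_simp
      _ = ψ ω' ^ ((α ^ n - 1) / (α - 1)) * p ω' ^ (α ^ n) := by rw [e2]; ring
  have hform : ∀ (n : ℕ) (ω' : Ω), φ^[n] p ω' = g n ω' / ∑ ω'', g n ω'' := by
    intro n ω'
    rw [(key_formula hpw hα hp n).2 ω']
    have hsum : ∑ ω'', ψ ω'' ^ ((α ^ n - 1) / (α - 1)) * p ω'' ^ (α ^ n) =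
        M ^ (α ^ n / (α - 1)) * ∑ ω'', g n ω'' := by
      rw [Finset.mul_sum]
      exact Finset.sum_congr rfl fun ω'' _ => (hFg n ω'').symm
    rw [← hFg n ω', hsum, mul_div_mul_left _ _ (Real.rpow_pos_of_pos hM _).ne']
  have ht : Tendsto (fun n : ℕ => α ^ n / (α - 1)) atTop atTop :=
    (tendsto_pow_atTop_atTop_of_one_lt hα).atTop_div_const hα1
  have hglim : ∀ ω', Tendsto (fun n => g n ω') atTop
      (𝓝 (if ω' ∈ S then ψ ω' ^ (1 / (1 - α)) else 0)) := by
    intro ω'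
    by_cases hmem : ω' ∈ S
    · rw [if_pos hmem]
      have h1 : a ω' / M = 1 := by rw [(hmemS ω').1 hmem, div_self hM.ne']
      have hconst : ∀ n, g n ω' = ψ ω' ^ (1 / (1 - α)) := by
        intro n
        simp only [hg]
        rw [h1, Real.one_rpow, one_mul]
      simp only [hconst]
      exact tendsto_const_nhds
    · rw [if_neg hmem]
      have hlt : a ω' < M :=
        lt_of_le_of_ne (hω0 ω' (Finset.mem_univ _)) (fun h => hmem ((hmemS ω').2 h))
      have hr1 : a ω' / M < 1 := (div_lt_one hM).mpr hlt
      have hr0 : (0:ℝ) ≤ a ω' / M := div_nonneg (hann ω') hM.le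
      have h0 := (tendsto_rpow_atTop_of_base_lt_one (a ω' / M) (by linarith) hr1).comp ht
      have h2 : Tendsto (fun n : ℕ => (a ω' / M) ^ (α ^ n / (α - 1)) * ψ ω' ^ (1 / (1 - α)))
          atTop (𝓝 (0 * ψ ω' ^ (1 / (1 - α)))) := h0.mul_const _
      rw [zero_mul] at h2
      exact h2
  have hDlim : Tendsto (fun n => ∑ ω'', g n ω'') atTop
      (𝓝 (∑ ω'' ∈ S, ψ ω'' ^ (1 / (1 - α)))) := by
    have h0 := tendsto_finset_sum Finset.univ (fun ω'' (_ : ω'' ∈ Finset.univ) => hglim ω'')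
    have e : ∑ ω'' , (if ω'' ∈ S then ψ ω'' ^ (1 / (1 - α)) else 0) =
        ∑ ω'' ∈ S, ψ ω'' ^ (1 / (1 - α)) := by
      rw [Finset.sum_ite_mem, Finset.univ_inter]
    rwa [e] at h0
  have hD : 0 < ∑ ω'' ∈ S, ψ ω'' ^ (1 / (1 - α)) :=
    Finset.sum_pos (fun ω'' _ => Real.rpow_pos_of_pos (hψ ω'') _)
      ⟨ω0, (hmemS ω0).2 rfl⟩
  have hmain : ∀ ω', Tendsto (fun n => φ^[n] p ω') atTop
      (𝓝 ((if ω' ∈ S then ψ ω' ^ (1 / (1 - α)) else 0) /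
        ∑ ω'' ∈ S, ψ ω'' ^ (1 / (1 - α)))) := by
    intro ω'
    have h0 := (hglim ω').div hDlim hD.ne'
    exact Tendsto.congr (fun n => (hform n ω').symm) h0
  constructor
  · intro h
    have hωS : ω ∈ S := by
      rw [hS, Finset.mem_filter]
      exact ⟨Finset.mem_univ _, h⟩
    have h0 := hmain ω
    rw [if_pos hωS] at h0
    exact h0
  · intro h
    have hωS : ω ∉ S := by
      rw [hS, Finset.mem_filter]
      rintro ⟨-, hh⟩
      exact h hh
    have h0 := hmain ω
    rw [if_neg hωS, zero_div] at h0
    exact h0
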